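/- Let L be a degree-b real polynomial with L(0) ≠ 0, and let P_1, ..., P_b be polynomials of degree less than N. Define p_k ∈ Π_N by L(∂) p_k = P_k. Let B be b linear functionals such that the b×b matrix with columns B(p_1), ..., B(p_b) is invertible. Then for every f ∈ Π_N and g ∈ ℝ^b there exist a unique u ∈ Π_N and unique scalars τ_1, ..., τ_b with L(∂)u + Σ_k τ_k P_k = f and B(u) = g. -/
import Mathlib

open Polynomial

/-- `diffOp` as a linear map. -/
noncomputable def diffOpT (L : ℝ[X]) : ℝ[X] →ₗ[ℝ] ℝ[X] :=
  ∑ k ∈ Finset.range (L.natDegree + 1),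
    L.coeff k • ((Polynomial.derivative : ℝ[X] →ₗ[ℝ] ℝ[X]) ^ k)

noncomputable def diffOp (L : ℝ[X]) (u : ℝ[X]) : ℝ[X] :=
  ∑ k ∈ Finset.range (L.natDegree + 1), L.coeff k • Polynomial.derivative^[k] u

lemma diffOpT_apply (L u : ℝ[X]) : diffOpT L u = diffOp L u := by
  simp [diffOpT, diffOp, LinearMap.sum_apply, Module.End.pow_apply]

lemma diffOpT_mem {N : ℕ} (L : ℝ[X]) {u : ℝ[X]} (hu : u ∈ degreeLT ℝ N) :
    diffOpT L u ∈ degreeLT ℝ N := by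
  have hit : ∀ k, derivative^[k] u ∈ degreeLT ℝ N := by
    intro k
    induction k with
    | zero => simpa using hu
    | succ k ih =>
      rw [Function.iterate_succ_apply']
      exact mem_degreeLT.2 (lt_of_le_of_lt degree_derivative_le (mem_degreeLT.1 ih))
  simp only [diffOpT, LinearMap.sum_apply, LinearMap.smul_apply, Module.End.pow_apply]
  exact Submodule.sum_mem _ fun k _ => Submodule.smul_mem _ _ (hit k)

lemma diffOpT_injective (L : ℝ[X]) (hL0 : L.coeff 0 ≠ 0) :
    Function.Injective (diffOpT L) := by
  rw [← LinearMap.ker_eq_bot, LinearMap.ker_eq_bot']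
  intro u hu
  by_contra h
  have hc : (diffOpT L u).coeff u.natDegree = L.coeff 0 * u.coeff u.natDegree := by
    simp only [diffOpT, LinearMap.sum_apply, LinearMap.smul_apply, Module.End.pow_apply]
    rw [finset_sum_coeff]
    rw [Finset.sum_eq_single 0]
    · simp
    · intro k _ hk
      have h0 : u.coeff (u.natDegree + k) = 0 :=
        coeff_eq_zero_of_natDegree_lt (Nat.lt_add_of_pos_right (Nat.pos_of_ne_zero hk))
      rw [coeff_smul, coeff_iterate_derivative, h0, smul_zero, smul_zero]
    · simp
  rw [hu, coeff_zero] at hc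
  exact h (by
    have := mul_eq_zero.mp hc.symm
    rcases this with h1 | h2
    · exact absurd h1 hL0
    · exact leadingCoeff_eq_zero.mp h2)

theorem tau_invertible_operator
    (b N : ℕ) (L : ℝ[X]) (hdeg : L.natDegree = b) (hL0 : L.coeff 0 ≠ 0)
    (P p : Fin b → ℝ[X])
    (hP : ∀ k, P k ∈ Polynomial.degreeLT ℝ N)
    (hp : ∀ k, p k ∈ Polynomial.degreeLT ℝ N)
    (hLp : ∀ k, diffOp L (p k) = P k)
    (B : ℝ[X] →ₗ[ℝ] (Fin b → ℝ))
    (hB : (Matrix.of fun i j : Fin b => B (p j) i).det ≠ 0)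
    (f : ℝ[X]) (hf : f ∈ Polynomial.degreeLT ℝ N)
    (g : Fin b → ℝ) :
    ∃! w : ℝ[X] × (Fin b → ℝ),
      w.1 ∈ Polynomial.degreeLT ℝ N ∧
      diffOp L w.1 + ∑ k, w.2 k • P k = f ∧
      B w.1 = g := by
  classical
  set M : Matrix (Fin b) (Fin b) ℝ := Matrix.of fun i j : Fin b => B (p j) i with hM
  have hMunit : IsUnit M.det := isUnit_iff_ne_zero.2 hB
  -- restricted operator
  have hrestrict : ∀ u ∈ degreeLT ℝ N, diffOpT L u ∈ degreeLT ℝ N :=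
    fun u hu => diffOpT_mem L hu
  set T' : degreeLT ℝ N →ₗ[ℝ] degreeLT ℝ N := (diffOpT L).restrict hrestrict with hT'
  haveI : FiniteDimensional ℝ (degreeLT ℝ N) :=
    LinearEquiv.finiteDimensional (degreeLTEquiv ℝ N).symm
  have hTinj := diffOpT_injective L hL0
  have hT'inj : Function.Injective T' := by
    intro x y hxy
    exact Subtype.ext (hTinj (by simpa [hT', LinearMap.restrict_apply, Subtype.ext_iff] using hxy))
  have hT'surj : Function.Surjective T' :=
    (LinearMap.injective_iff_surjective).1 hT'inj
  obtain ⟨v0s, hv0⟩ := hT'surj ⟨f, hf⟩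
  set v0 : ℝ[X] := (v0s : ℝ[X]) with hv0def
  have hv0mem : v0 ∈ degreeLT ℝ N := v0s.2
  have hTv0 : diffOpT L v0 = f := congrArg Subtype.val hv0
  have hTp : ∀ k, diffOpT L (p k) = P k := fun k => by rw [diffOpT_apply]; exact hLp k
  -- the linear system on τ
  have hmulVec : ∀ τ : Fin b → ℝ, M.mulVec τ = fun i => ∑ k, τ k * B (p k) i := by
    intro τ; funext i
    simp [Matrix.mulVec, dotProduct, hM, mul_comm]
  set τ0 : Fin b → ℝ := M⁻¹.mulVec (B v0 - g) with hτ0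
  have hMτ0 : M.mulVec τ0 = B v0 - g := by
    rw [hτ0, Matrix.mulVec_mulVec, Matrix.mul_nonsing_inv _ hMunit, Matrix.one_mulVec]
  -- the candidate
  set u0 : ℝ[X] := v0 - ∑ k, τ0 k • p k with hu0
  have key : ∀ (u : ℝ[X]) (τ : Fin b → ℝ), u ∈ degreeLT ℝ N →
      (diffOp L u + ∑ k, τ k • P k = f ↔ u = v0 - ∑ k, τ k • p k) := by
    intro u τ hu
    constructor
    · intro h
      apply hTinj
      rw [map_sub, hTv0, map_sum]
      have : diffOpT L u = f - ∑ k, τ k • P k := by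
        rw [diffOpT_apply, ← h]; ring
      rw [this]
      congr 1
      exact Finset.sum_congr rfl fun k _ => by rw [map_smul, hTp]
    · intro h
      rw [← diffOpT_apply, h, map_sub, hTv0, map_sum]
      have : ∀ k ∈ Finset.univ, diffOpT L (τ k • p k) = τ k • P k :=
        fun k _ => by rw [map_smul, hTp]
      rw [Finset.sum_congr rfl this]; ring
  have hBform : ∀ τ : Fin b → ℝ, B (v0 - ∑ k, τ k • p k) = B v0 - M.mulVec τ := by
    intro τ
    rw [map_sub, map_sum, hmulVec]
    congr 1
    funext i
    simp [Finset.sum_apply]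
  refine ⟨⟨u0, τ0⟩, ⟨?_, ?_, ?_⟩, ?_⟩
  · exact Submodule.sub_mem _ hv0mem
      (Submodule.sum_mem _ fun k _ => Submodule.smul_mem _ _ (hp k))
  · exact (key u0 τ0 (Submodule.sub_mem _ hv0mem
      (Submodule.sum_mem _ fun k _ => Submodule.smul_mem _ _ (hp k)))).2 hu0
  · rw [hu0, hBform, hMτ0]; abel
  · rintro ⟨u, τ⟩ ⟨hmem, heq, hBeq⟩
    have hu : u = v0 - ∑ k, τ k • p k := (key u τ hmem).1 heq
    have hMτ : M.mulVec τ = B v0 - g := by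
      rw [hu, hBform] at hBeq
      have : M.mulVec τ = B v0 - (B v0 - M.mulVec τ) := by abel
      rw [this, hBeq]
    have hττ : τ = τ0 := by
      rw [hτ0, ← hMτ, Matrix.mulVec_mulVec, Matrix.nonsing_inv_mul _ hMunit, Matrix.one_mulVec]
    refine Prod.ext ?_ hττ
    simp only
    rw [hu, hu0, hττ]
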